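/- arXiv:1303.0697 — 3 statements merged into one kernel-verified Lean document; each statement's English description precedes it below -/
import Mathlib

section
/- Let F be a field, α₀ : F → F a field automorphism with α₀ ∘ α₀ = id, V a finite-dimensional F-vector space, and W := End_F(V). Then: (1) for every nondegenerate α₀-sesquilinear form b : V × V → F there is a unique anti-automorphism α of W such that b(w x, y) = b(x, α(w) y) for all x, y ∈ V and w ∈ W, and this α satisfies α(c·id_V) = α₀(c)·id_V for all c ∈ F; (2) conversely, every anti-automorphism α of W with α(c·id_V) = α₀(c)·id_V for all c ∈ F arises in this way from some nondegenerate α₀-sesquilinear form; (3) two nondegenerate α₀-sesquilinear forms b, b' determine the same anti-automorphism of W if and only if b' = b·c for some c ∈ F \ {0}; (4) the anti-automorphism α corresponding to b is an involution if and only if there exists λ ∈ F with λ·α₀(λ) = 1 and b(x, y) = λ·α₀(b(y, x)) for all x, y ∈ V (i.e., b is λ-hermitian). -/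
universe u v

/-- An anti-endomorphism of a ring: additive, unital, reverses multiplication. -/
def IsAntiEndo {W : Type*} [Ring W] (α : W → W) : Prop :=
  (∀ u v : W, α (u + v) = α u + α v) ∧ α 1 = 1 ∧ ∀ u v : W, α (u * v) = α v * α u

/-- An anti-automorphism of a ring: a bijective anti-endomorphism. -/
def IsAntiAuto {W : Type*} [Ring W] (α : W → W) : Prop :=
  IsAntiEndo α ∧ Function.Bijective α

/-- An `α₀`-sesquilinear form on `V`: biadditive, `α₀`-semilinear in the first variable
and linear in the second. -/
def IsSesq {F : Type u} [Field F] {V : Type v} [AddCommGroup V] [Module F V]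
    (α₀ : F → F) (b : V → V → F) : Prop :=
  (∀ x x' y : V, b (x + x') y = b x y + b x' y) ∧
  (∀ x y y' : V, b x (y + y') = b x y + b x y') ∧
  (∀ (a : F) (x y : V), b (a • x) y = α₀ a * b x y) ∧
  (∀ (a : F) (x y : V), b x (a • y) = b x y * a)

/-- Nondegeneracy of a form `b : V × V → F`. -/
def Nondeg {F : Type u} [Field F] {V : Type v} [AddCommGroup V] [Module F V]
    (b : V → V → F) : Prop :=
  (∀ x : V, (∀ y : V, b x y = 0) → x = 0) ∧ (∀ y : V, (∀ x : V, b x y = 0) → y = 0)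

/-- `α` is adjoint to the form `b`: `b(w x, y) = b(x, α(w) y)`. -/
def AdjRel {F : Type u} [Field F] {V : Type v} [AddCommGroup V] [Module F V]
    (b : V → V → F) (α : Module.End F V → Module.End F V) : Prop :=
  ∀ (w : Module.End F V) (x y : V), b (w x) y = b x (α w y)

set_option linter.unusedSectionVars false

namespace Stmt0Aux

variable {F : Type u} [Field F] {V : Type v} [AddCommGroup V] [Module F V]
variable (α₀ : F →+* F)

theorem zero_right {b : V → V → F} (hb : IsSesq (⇑α₀) b) (x : V) : b x 0 = 0 := by
  have h := hb.2.1 x 0 0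
  rw [add_zero] at h
  exact (left_eq_add.mp h)

theorem zero_left {b : V → V → F} (hb : IsSesq (⇑α₀) b) (y : V) : b 0 y = 0 := by
  have h := hb.1 0 0 y
  rw [add_zero] at h
  exact (left_eq_add.mp h)

theorem sub_right {b : V → V → F} (hb : IsSesq (⇑α₀) b) (x y y' : V) :
    b x (y - y') = b x y - b x y' := by
  have : y - y' = y + (-1 : F) • y' := by rw [neg_one_smul, sub_eq_add_neg]
  rw [this, hb.2.1, hb.2.2.2]
  ring

theorem sub_left {b : V → V → F} (hb : IsSesq (⇑α₀) b) (x x' y : V) :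
    b (x - x') y = b x y - b x' y := by
  have : x - x' = x + (-1 : F) • x' := by rw [neg_one_smul, sub_eq_add_neg]
  rw [this, hb.1, hb.2.2.1, map_neg, map_one]
  ring

theorem cancel_right {b : V → V → F} (hb : IsSesq (⇑α₀) b) (hnd : Nondeg b)
    {y y' : V} (h : ∀ x, b x y = b x y') : y = y' := by
  have h0 : ∀ x, b x (y - y') = 0 := fun x => by rw [sub_right α₀ hb, h, sub_self]
  have := hnd.2 _ h0
  rwa [sub_eq_zero] at this

theorem cancel_left {b : V → V → F} (hb : IsSesq (⇑α₀) b) (hnd : Nondeg b)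
    {x x' : V} (h : ∀ y, b x y = b x' y) : x = x' := by
  have h0 : ∀ y, b (x - x') y = 0 := fun y => by rw [sub_left α₀ hb, h, sub_self]
  have := hnd.1 _ h0
  rwa [sub_eq_zero] at this

variable [FiniteDimensional F V]

/-- coordinatewise conjugation with respect to a fixed basis -/
noncomputable def conj : V → V := fun y =>
  ∑ i, α₀ ((Module.finBasis F V).repr y i) • (Module.finBasis F V) i

theorem conj_add (y y' : V) : conj α₀ (y + y') = conj α₀ y + conj α₀ y' := by
  simp [conj, map_add, add_smul, Finset.sum_add_distrib]

theorem conj_smul (a : F) (y : V) : conj α₀ (a • y) = α₀ a • conj α₀ y := by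
  simp [conj, Finset.smul_sum, smul_smul, map_mul]

theorem conj_conj (hα₀ : ∀ a : F, α₀ (α₀ a) = a) (y : V) : conj α₀ (conj α₀ y) = y := by
  unfold conj
  rw [Module.Basis.repr_sum_self]
  simp [hα₀]

theorem conj_surjective (hα₀ : ∀ a : F, α₀ (α₀ a) = a) : Function.Surjective (conj α₀ (V := V)) :=
  fun y => ⟨conj α₀ y, conj_conj α₀ hα₀ y⟩

theorem conj_zero : conj α₀ (0 : V) = 0 := by
  have := conj_smul α₀ (0 : F) (0 : V)
  simpa using this

theorem alpha0_inj (hα₀ : ∀ a : F, α₀ (α₀ a) = a) : Function.Injective α₀ :=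
  fun a b h => by rw [← hα₀ a, h, hα₀]

/-- right representability: every α₀-semilinear functional is `b (·) y` for a unique `y` -/
theorem rep_right (hα₀ : ∀ a : F, α₀ (α₀ a) = a) {b : V → V → F} (hb : IsSesq (⇑α₀) b)
    (hnd : Nondeg b) (h : V → F) (h1 : ∀ x x', h (x + x') = h x + h x')
    (h2 : ∀ (a : F) x, h (a • x) = α₀ a * h x) :
    ∃! y : V, ∀ x, b x y = h x := by
  -- the linear map z ↦ (x ↦ α₀ (b x (conj z)))
  set L : V →ₗ[F] Module.Dual F V :=
    { toFun := fun z =>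
        { toFun := fun x => α₀ (b x (conj α₀ z))
          map_add' := fun x x' => by rw [hb.1, map_add]
          map_smul' := fun a x => by
            dsimp only [RingHom.id_apply, smul_eq_mul]
            rw [hb.2.2.1, map_mul, hα₀] }
      map_add' := fun z z' => by
        ext x
        simp only [LinearMap.coe_mk, AddHom.coe_mk, LinearMap.add_apply]
        rw [conj_add, hb.2.1, map_add]
      map_smul' := fun a z => by
        ext x
        simp only [LinearMap.coe_mk, AddHom.coe_mk, RingHom.id_apply, LinearMap.smul_apply,
          smul_eq_mul]
        rw [conj_smul, hb.2.2.2, map_mul, hα₀, mul_comm] } with hL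
  have hLinj : Function.Injective L := by
    intro z z' hzz
    have hz : ∀ x, b x (conj α₀ z) = b x (conj α₀ z') := by
      intro x
      have := congrArg (fun f => (f : Module.Dual F V) x) hzz
      simp only [hL, LinearMap.coe_mk, AddHom.coe_mk] at this
      exact alpha0_inj α₀ hα₀ this
    have := cancel_right α₀ hb hnd hz
    have := congrArg (conj α₀) this
    rwa [conj_conj α₀ hα₀, conj_conj α₀ hα₀] at this
  have hLsurj : Function.Surjective L := by
    rw [← LinearMap.injective_iff_surjective_of_finrank_eq_finrank
      (Subspace.dual_finrank_eq (V := V)).symm]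
    exact hLinj
  obtain ⟨z, hz⟩ := hLsurj
    { toFun := fun x => α₀ (h x)
      map_add' := fun x x' => by rw [h1, map_add]
      map_smul' := fun a x => by
        dsimp only [RingHom.id_apply, smul_eq_mul]
        rw [h2, map_mul, hα₀] }
  refine ⟨conj α₀ z, fun x => ?_, fun y' hy' => ?_⟩
  · have := congrArg (fun f => (f : Module.Dual F V) x) hz
    simp only [hL, LinearMap.coe_mk, AddHom.coe_mk] at this
    exact alpha0_inj α₀ hα₀ this
  · refine cancel_right α₀ hb hnd fun x => ?_
    rw [hy' x]
    have := congrArg (fun f => (f : Module.Dual F V) x) hz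
    simp only [hL, LinearMap.coe_mk, AddHom.coe_mk] at this
    exact (alpha0_inj α₀ hα₀ this).symm

/-- left representability -/
theorem rep_left (hα₀ : ∀ a : F, α₀ (α₀ a) = a) {b : V → V → F} (hb : IsSesq (⇑α₀) b)
    (hnd : Nondeg b) (g : V → F) (g1 : ∀ y y', g (y + y') = g y + g y')
    (g2 : ∀ (a : F) y, g (a • y) = g y * a) :
    ∃! z : V, ∀ y, b z y = g y := by
  set L : V →ₗ[F] Module.Dual F V :=
    { toFun := fun z =>
        { toFun := fun y => b (conj α₀ z) y
          map_add' := fun y y' => by rw [hb.2.1]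
          map_smul' := fun a y => by
            dsimp only [RingHom.id_apply, smul_eq_mul]
            rw [hb.2.2.2, mul_comm] }
      map_add' := fun z z' => by
        ext y
        simp only [LinearMap.coe_mk, AddHom.coe_mk, LinearMap.add_apply]
        rw [conj_add, hb.1]
      map_smul' := fun a z => by
        ext y
        simp only [LinearMap.coe_mk, AddHom.coe_mk, RingHom.id_apply, LinearMap.smul_apply,
          smul_eq_mul]
        rw [conj_smul, hb.2.2.1, hα₀] } with hL
  have hLinj : Function.Injective L := by
    intro z z' hzz
    have hz : ∀ y, b (conj α₀ z) y = b (conj α₀ z') y := by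
      intro y
      have := congrArg (fun f => (f : Module.Dual F V) y) hzz
      simpa only [hL, LinearMap.coe_mk, AddHom.coe_mk] using this
    have := cancel_left α₀ hb hnd hz
    have := congrArg (conj α₀) this
    rwa [conj_conj α₀ hα₀, conj_conj α₀ hα₀] at this
  have hLsurj : Function.Surjective L := by
    rw [← LinearMap.injective_iff_surjective_of_finrank_eq_finrank
      (Subspace.dual_finrank_eq (V := V)).symm]
    exact hLinj
  obtain ⟨z, hz⟩ := hLsurj
    { toFun := g
      map_add' := g1
      map_smul' := fun a y => by
        dsimp only [RingHom.id_apply, smul_eq_mul]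
        rw [g2, mul_comm] }
  refine ⟨conj α₀ z, fun y => ?_, fun z' hz' => ?_⟩
  · have := congrArg (fun f => (f : Module.Dual F V) y) hz
    simpa only [hL, LinearMap.coe_mk, AddHom.coe_mk] using this
  · refine cancel_left α₀ hb hnd fun y => ?_
    rw [hz' y]
    have := congrArg (fun f => (f : Module.Dual F V) y) hz
    simpa only [hL, LinearMap.coe_mk, AddHom.coe_mk] using this.symm

end Stmt0Aux

namespace Stmt0Aux

variable {F : Type u} [Field F] {V : Type v} [AddCommGroup V] [Module F V]
variable (α₀ : F →+* F)

theorem exists_dual {v : V} (hv : v ≠ 0) : ∃ f : Module.Dual F V, f v = 1 := by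
  have h : ¬ ∀ φ : Module.Dual F V, φ v = 0 := by
    rw [Module.forall_dual_apply_eq_zero_iff]
    exact hv
  push_neg at h
  obtain ⟨φ, hφ⟩ := h
  exact ⟨(φ v)⁻¹ • φ, by simp [inv_mul_cancel₀ hφ]⟩

variable [FiniteDimensional F V]

theorem adjoint_exists (hα₀ : ∀ a : F, α₀ (α₀ a) = a) {b : V → V → F}
    (hb : IsSesq (⇑α₀) b) (hnd : Nondeg b) :
    ∃ α : Module.End F V → Module.End F V, IsAntiAuto α ∧ AdjRel b α := by
  have HA : ∀ (w : Module.End F V) (y : V), ∃! z : V, ∀ x, b x z = b (w x) y := fun w y =>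
    rep_right α₀ hα₀ hb hnd (fun x => b (w x) y)
      (fun x x' => by rw [map_add, hb.1]) (fun a x => by rw [map_smul, hb.2.2.1])
  choose A hA _hAu using HA
  have HB : ∀ (w : Module.End F V) (x : V), ∃! z : V, ∀ y, b z y = b x (w y) := fun w x =>
    rep_left α₀ hα₀ hb hnd (fun y => b x (w y))
      (fun y y' => by rw [map_add, hb.2.1]) (fun a y => by rw [map_smul, hb.2.2.2])
  choose Bm hB _hBu using HB
  let αf : Module.End F V → Module.End F V := fun w =>
    { toFun := A w
      map_add' := fun y y' => cancel_right α₀ hb hnd fun x => by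
        rw [hA w (y + y') x, hb.2.1 x (A w y) (A w y'), hA w y x, hA w y' x, hb.2.1]
      map_smul' := fun a y => by
        dsimp only [RingHom.id_apply]
        refine cancel_right α₀ hb hnd fun x => ?_
        rw [hA w (a • y) x, hb.2.2.2 a x (A w y), hA w y x, hb.2.2.2] }
  let βf : Module.End F V → Module.End F V := fun w =>
    { toFun := Bm w
      map_add' := fun x x' => cancel_left α₀ hb hnd fun y => by
        rw [hB w (x + x') y, hb.1 (Bm w x) (Bm w x') y, hB w x y, hB w x' y, hb.1]
      map_smul' := fun a x => by
        dsimp only [RingHom.id_apply]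
        refine cancel_left α₀ hb hnd fun y => ?_
        rw [hB w (a • x) y, hb.2.2.1 a (Bm w x) y, hB w x y, hb.2.2.1] }
  have hαf : ∀ w y, αf w y = A w y := fun _ _ => rfl
  have hβf : ∀ w x, βf w x = Bm w x := fun _ _ => rfl
  have hadj : AdjRel b αf := fun w x y => by rw [hαf]; exact (hA w y x).symm
  refine ⟨αf, ⟨⟨?_, ?_, ?_⟩, ?_, ?_⟩, hadj⟩
  · -- additive
    intro u v
    ext y
    rw [LinearMap.add_apply, hαf, hαf, hαf]
    refine cancel_right α₀ hb hnd fun x => ?_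
    rw [hA (u + v) y x, hb.2.1 x (A u y) (A v y), hA u y x, hA v y x,
      LinearMap.add_apply, hb.1]
  · -- unital
    ext y
    rw [hαf]
    refine cancel_right α₀ hb hnd fun x => ?_
    rw [hA 1 y x]
    simp
  · -- anti-multiplicative
    intro u v
    ext y
    rw [Module.End.mul_apply, hαf, hαf, hαf]
    refine cancel_right α₀ hb hnd fun x => ?_
    rw [hA (u * v) y x, hA v (A u y) x, hA u y (v x), Module.End.mul_apply]
  · -- injective
    intro u v huv
    ext x
    refine cancel_left α₀ hb hnd fun y => ?_
    have h1 : A u y = A v y := by rw [← hαf, ← hαf, huv]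
    rw [← hA u y x, h1, hA v y x]
  · -- surjective
    intro u
    refine ⟨βf u, ?_⟩
    ext y
    rw [hαf]
    refine cancel_right α₀ hb hnd fun x => ?_
    rw [hA (βf u) y x]
    exact hB u x y

theorem adjoint_unique {b : V → V → F} (hb : IsSesq (⇑α₀) b) (hnd : Nondeg b)
    {α α' : Module.End F V → Module.End F V} (h : AdjRel b α) (h' : AdjRel b α') :
    α = α' := by
  funext w
  ext y
  exact cancel_right α₀ hb hnd fun x => by rw [← h w x y, h' w x y]

theorem adjoint_restrict {b : V → V → F} (hb : IsSesq (⇑α₀) b) (hnd : Nondeg b)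
    {α : Module.End F V → Module.End F V} (hadj : AdjRel b α) (c : F) :
    α (c • (1 : Module.End F V)) = α₀ c • (1 : Module.End F V) := by
  ext y
  refine cancel_right α₀ hb hnd fun x => ?_
  rw [← hadj (c • 1) x y]
  simp only [LinearMap.smul_apply, Module.End.one_apply]
  rw [hb.2.2.1, hb.2.2.2, mul_comm]

end Stmt0Aux

namespace Stmt0Aux

variable {F : Type u} [Field F] {V : Type v} [AddCommGroup V] [Module F V]
variable (α₀ : F →+* F)

theorem exists_form [Nontrivial V] {α : Module.End F V → Module.End F V}
    (hauto : IsAntiAuto α)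
    (hres : ∀ c : F, α (c • (1 : Module.End F V)) = α₀ c • (1 : Module.End F V)) :
    ∃ b : V → V → F, IsSesq (⇑α₀) b ∧ Nondeg b ∧ AdjRel b α := by
  obtain ⟨⟨hadd, hone, hmul⟩, hinj, hsurj⟩ := hauto
  have hα0 : α 0 = 0 := by
    have h := hadd 0 0
    rw [add_zero] at h
    exact left_eq_add.mp h
  have hsmul : ∀ (c : F) (w : Module.End F V), α (c • w) = α₀ c • α w := by
    intro c w
    have h1 : c • w = (c • (1 : Module.End F V)) * w := by rw [smul_mul_assoc, one_mul]
    rw [h1, hmul, hres, mul_smul_comm, mul_one]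
  obtain ⟨v₀, hv₀⟩ := exists_ne (0 : V)
  obtain ⟨f₀, hf₀⟩ := exists_dual (F := F) hv₀
  set T : V → Module.End F V := fun x => LinearMap.smulRight f₀ x with hT
  have hTapp : ∀ x v, T x v = f₀ v • x := fun x v => rfl
  set e : Module.End F V := T v₀ with he
  have heapp : ∀ v, e v = f₀ v • v₀ := fun v => rfl
  have hev₀ : e v₀ = v₀ := by rw [heapp, hf₀, one_smul]
  have hTadd : ∀ x x', T (x + x') = T x + T x' := by
    intro x x'; ext v
    simp [hTapp, smul_add]
  have hTsmul : ∀ (a : F) x, T (a • x) = a • T x := by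
    intro a x; ext v
    exact smul_comm _ _ _
  have hTw : ∀ (w : Module.End F V) x, T (w x) = w * T x := by
    intro w x; ext v
    simp [hTapp, Module.End.mul_apply, map_smul]
  have hTe : ∀ x, T x = T x * e := by
    intro x; ext v
    simp [hTapp, Module.End.mul_apply, heapp, map_smul, hf₀]
  have hwe : ∀ w : Module.End F V, w * e = T (w v₀) := by
    intro w; ext v
    simp [hTapp, Module.End.mul_apply, heapp, map_smul]
  have hewe : ∀ w : Module.End F V, e * w * e = f₀ (w v₀) • e := by
    intro w; ext v
    simp only [Module.End.mul_apply, LinearMap.smul_apply]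
    rw [heapp v, map_smul, map_smul, heapp (w v₀), smul_comm]
  have he2 : e * e = e := by rw [hwe, hev₀]
  have hene : e ≠ 0 := by
    intro h
    apply hv₀
    rw [← hev₀, h, LinearMap.zero_apply]
  have hαinj0 : ∀ w : Module.End F V, α w = 0 → w = 0 := by
    intro w h
    apply hinj
    rw [h, hα0]
  obtain ⟨v₁, hv₁⟩ : ∃ v, α e v ≠ 0 := by
    by_contra h
    push_neg at h
    exact hene (hαinj0 e (LinearMap.ext fun v => by rw [h v, LinearMap.zero_apply]))
  set z₀ : V := α e v₁ with hz₀def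
  have hz₀ne : z₀ ≠ 0 := hv₁
  have hαe2 : α e * α e = α e := by rw [← hmul, he2]
  have hz₀fix : α e z₀ = z₀ := by
    have := congrArg (fun u : Module.End F V => u v₁) hαe2
    simpa [Module.End.mul_apply] using this
  have hrange : ∀ v : V, ∃ d : F, α e v = d • z₀ := by
    intro v
    obtain ⟨g, hg⟩ := exists_dual (F := F) hz₀ne
    obtain ⟨w, hw⟩ := hsurj (LinearMap.smulRight g v)
    have key : α e * LinearMap.smulRight g v * α e = α₀ (f₀ (w v₀)) • α e := by
      calc α e * LinearMap.smulRight g v * α e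
          = α e * α w * α e := by rw [hw]
        _ = α (w * e) * α e := by rw [hmul w e]
        _ = α (e * (w * e)) := by rw [hmul e (w * e)]
        _ = α (e * w * e) := by rw [mul_assoc]
        _ = α (f₀ (w v₀) • e) := by rw [hewe]
        _ = α₀ (f₀ (w v₀)) • α e := hsmul _ _
    refine ⟨α₀ (f₀ (w v₀)), ?_⟩
    have := congrArg (fun u : Module.End F V => u v₁) key
    have hg' : g (α e v₁) = 1 := hg
    simpa [Module.End.mul_apply, hg'] using this
  obtain ⟨g₀, hg₀⟩ := exists_dual (F := F) hz₀ne
  refine ⟨fun x y => g₀ (α (T x) y), ⟨?_, ?_, ?_, ?_⟩, ⟨?_, ?_⟩, ?_⟩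
  · -- additive in x
    intro x x' y
    dsimp only
    rw [hTadd, hadd, LinearMap.add_apply, map_add]
  · -- additive in y
    intro x y y'
    dsimp only
    rw [map_add, map_add]
  · -- semilinear in x
    intro a x y
    dsimp only
    rw [hTsmul, hsmul, LinearMap.smul_apply, map_smul, smul_eq_mul]
  · -- linear in y
    intro a x y
    dsimp only
    rw [map_smul, map_smul, smul_eq_mul, mul_comm]
  · -- left nondegenerate
    intro x hx
    dsimp only at hx
    by_contra hxne
    have hTxne : T x ≠ 0 := by
      intro h
      apply hxne
      have := congrArg (fun u : Module.End F V => u v₀) h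
      simpa [hTapp, hf₀] using this
    have hαTxne : α (T x) ≠ 0 := fun h => hTxne (hαinj0 _ h)
    obtain ⟨y₁, hy₁⟩ : ∃ v, α (T x) v ≠ 0 := by
      by_contra h
      push_neg at h
      exact hαTxne (LinearMap.ext fun v => by rw [h v, LinearMap.zero_apply])
    have hfac : α (T x) y₁ = α e (α (T x) y₁) := by
      have h1 : α (T x) = α e * α (T x) := by
        conv_lhs => rw [hTe x]
        rw [hmul]
      conv_lhs => rw [h1]
      rw [Module.End.mul_apply]
    obtain ⟨d, hd⟩ := hrange (α (T x) y₁)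
    have hdne : d ≠ 0 := by
      intro h
      apply hy₁
      rw [hfac, hd, h, zero_smul]
    apply hdne
    have := hx y₁
    rw [show g₀ (α (T x) y₁) = d from by rw [hfac, hd, map_smul, hg₀, smul_eq_mul, mul_one]] at this
    exact this
  · -- right nondegenerate
    intro y hy
    dsimp only at hy
    by_contra hyne
    obtain ⟨g, hg⟩ := exists_dual (F := F) hyne
    obtain ⟨w, hw⟩ := hsurj (LinearMap.smulRight g z₀)
    have h1 : α (T (w v₀)) = α e * LinearMap.smulRight g z₀ := by
      rw [← hwe, hmul, hw]
    have := hy (w v₀)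
    rw [h1, Module.End.mul_apply, LinearMap.smulRight_apply, hg, one_smul, hz₀fix, hg₀] at this
    exact one_ne_zero this
  · -- adjoint relation
    intro w x y
    dsimp only
    rw [hTw, hmul, Module.End.mul_apply]

variable [FiniteDimensional F V]

theorem same_scalar (hα₀ : ∀ a : F, α₀ (α₀ a) = a) {b b' : V → V → F}
    (hb : IsSesq (⇑α₀) b) (hnd : Nondeg b) (hb' : IsSesq (⇑α₀) b') (hnd' : Nondeg b')
    {α : Module.End F V → Module.End F V} (hsurj : Function.Surjective α)
    (h1 : AdjRel b α) (h2 : AdjRel b' α) :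
    ∃ c : F, c ≠ 0 ∧ ∀ x y : V, b' x y = b x y * c := by
  rcases subsingleton_or_nontrivial V with hV | hV
  · refine ⟨1, one_ne_zero, fun x y => ?_⟩
    rw [Subsingleton.elim x 0, zero_left α₀ hb, zero_left α₀ hb', zero_mul]
  · have HU : ∀ y : V, ∃! z : V, ∀ x, b x z = b' x y := fun y =>
      rep_right α₀ hα₀ hb hnd (fun x => b' x y)
        (fun x x' => hb'.1 x x' y) (fun a x => hb'.2.2.1 a x y)
    choose U hU _hUu using HU
    have hcomm : ∀ (w : Module.End F V) (y : V), U (w y) = w (U y) := by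
      intro w y
      refine cancel_right α₀ hb hnd fun x => ?_
      obtain ⟨w', hw'⟩ := hsurj w
      calc b x (U (w y)) = b' x (w y) := hU (w y) x
        _ = b' x (α w' y) := by rw [hw']
        _ = b' (w' x) y := (h2 w' x y).symm
        _ = b (w' x) (U y) := (hU y (w' x)).symm
        _ = b x (α w' (U y)) := h1 w' x (U y)
        _ = b x (w (U y)) := by rw [hw']
    obtain ⟨v₀, hv₀⟩ := exists_ne (0 : V)
    obtain ⟨f₀, hf₀⟩ := exists_dual (F := F) hv₀
    set c : F := f₀ (U v₀) with hc
    have hUy : ∀ y : V, U y = c • y := by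
      intro y
      have h := hcomm (LinearMap.smulRight f₀ y) v₀
      rw [LinearMap.smulRight_apply, hf₀, one_smul, LinearMap.smulRight_apply] at h
      exact h
    have hb'eq : ∀ x y : V, b' x y = b x y * c := by
      intro x y
      rw [← hU y x, hUy y, hb.2.2.2]
    refine ⟨c, ?_, hb'eq⟩
    intro hc0
    obtain ⟨y, hy⟩ := exists_ne (0 : V)
    exact hy (hnd'.2 y fun x => by rw [hb'eq, hc0, mul_zero])

end Stmt0Aux

/-- The classical correspondence between nondegenerate sesquilinear forms
over `(F, α₀)` up to scalars and anti-automorphisms of `End_F(V)` restricting to `α₀` on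
`F`, with involutions corresponding to hermitian forms. -/
theorem stmt_0 {F : Type u} [Field F] (α₀ : F →+* F) (hα₀ : ∀ a : F, α₀ (α₀ a) = a)
    {V : Type v} [AddCommGroup V] [Module F V] [FiniteDimensional F V] :
    -- (1) existence and uniqueness of the adjoint anti-automorphism, which restricts to α₀
    (∀ b : V → V → F, IsSesq (α₀ : F → F) b → Nondeg b →
      (∃! α : Module.End F V → Module.End F V, IsAntiAuto α ∧ AdjRel b α) ∧
      (∀ α : Module.End F V → Module.End F V, IsAntiAuto α → AdjRel b α →
        ∀ c : F, α (c • (1 : Module.End F V)) = α₀ c • (1 : Module.End F V))) ∧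
    -- (2) every anti-automorphism restricting to α₀ comes from a nondegenerate form
    (∀ α : Module.End F V → Module.End F V, IsAntiAuto α →
      (∀ c : F, α (c • (1 : Module.End F V)) = α₀ c • (1 : Module.End F V)) →
      ∃ b : V → V → F, IsSesq (α₀ : F → F) b ∧ Nondeg b ∧ AdjRel b α) ∧
    -- (3) two forms have the same anti-automorphism iff they agree up to a scalar
    (∀ b b' : V → V → F, IsSesq (α₀ : F → F) b → Nondeg b →
      IsSesq (α₀ : F → F) b' → Nondeg b' →
      ((∃ α : Module.End F V → Module.End F V, IsAntiAuto α ∧ AdjRel b α ∧ AdjRel b' α) ↔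
        ∃ c : F, c ≠ 0 ∧ ∀ x y : V, b' x y = b x y * c)) ∧
    -- (4) involutions correspond to λ-hermitian forms
    (∀ (b : V → V → F) (α : Module.End F V → Module.End F V),
      IsSesq (α₀ : F → F) b → Nondeg b → IsAntiAuto α → AdjRel b α →
      ((∀ w : Module.End F V, α (α w) = w) ↔
        ∃ lam : F, lam * α₀ lam = 1 ∧ ∀ x y : V, b x y = lam * α₀ (b y x))) := by
  refine ⟨?_, ?_, ?_, ?_⟩
  · -- (1)
    intro b hb hnd
    obtain ⟨α, hauto, hadj⟩ := Stmt0Aux.adjoint_exists α₀ hα₀ hb hnd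
    refine ⟨⟨α, ⟨hauto, hadj⟩, fun α' h' => Stmt0Aux.adjoint_unique α₀ hb hnd h'.2 hadj⟩, ?_⟩
    intro α' _ hadj' c
    exact Stmt0Aux.adjoint_restrict α₀ hb hnd hadj' c
  · -- (2)
    intro α hauto hres
    rcases subsingleton_or_nontrivial V with hV | hV
    · exact ⟨fun _ _ => 0,
        ⟨fun _ _ _ => by ring, fun _ _ _ => by ring, fun _ _ _ => by ring,
          fun _ _ _ => by ring⟩,
        ⟨fun x _ => Subsingleton.elim x 0, fun y _ => Subsingleton.elim y 0⟩,
        fun _ _ _ => rfl⟩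
    · exact Stmt0Aux.exists_form α₀ hauto hres
  · -- (3)
    intro b b' hb hnd hb' hnd'
    constructor
    · rintro ⟨α, hauto, h1, h2⟩
      exact Stmt0Aux.same_scalar α₀ hα₀ hb hnd hb' hnd' hauto.2.2 h1 h2
    · rintro ⟨c, hc, hcb⟩
      obtain ⟨α, hauto, hadj⟩ := Stmt0Aux.adjoint_exists α₀ hα₀ hb hnd
      refine ⟨α, hauto, hadj, fun w x y => ?_⟩
      rw [hcb, hcb, hadj]
  · -- (4)
    intro b α hb hnd hauto hadj
    constructor
    · intro hinv
      rcases subsingleton_or_nontrivial V with hV | hV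
      · refine ⟨1, by simp, fun x y => ?_⟩
        rw [Subsingleton.elim x 0, Subsingleton.elim y 0, Stmt0Aux.zero_left α₀ hb]
        simp
      · have hbts : IsSesq (⇑α₀) (fun x y => α₀ (b y x)) :=
          ⟨fun x x' y => by dsimp only; rw [hb.2.1, map_add],
           fun x y y' => by dsimp only; rw [hb.1, map_add],
           fun a x y => by dsimp only; rw [hb.2.2.2, map_mul, mul_comm],
           fun a x y => by dsimp only; rw [hb.2.2.1, map_mul, hα₀, mul_comm]⟩
        have hbtn : Nondeg (fun x y => α₀ (b y x)) :=
          ⟨fun x hx => hnd.2 x fun y =>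
            Stmt0Aux.alpha0_inj α₀ hα₀ ((hx y).trans (map_zero α₀).symm),
           fun y hy => hnd.1 y fun x =>
            Stmt0Aux.alpha0_inj α₀ hα₀ ((hy x).trans (map_zero α₀).symm)⟩
        have hbta : AdjRel (fun x y => α₀ (b y x)) α := by
          intro w x y
          dsimp only
          have h1 : b (α w y) x = b y (α (α w) x) := hadj (α w) y x
          rw [hinv w] at h1
          rw [← h1]
        obtain ⟨c, hc, hcb⟩ :=
          Stmt0Aux.same_scalar α₀ hα₀ hb hnd hbts hbtn hauto.2.2 hadj hbta
        have hcb' : ∀ x y : V, α₀ (b y x) = b x y * c := fun x y => hcb x y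
        obtain ⟨y0, hy0⟩ := exists_ne (0 : V)
        obtain ⟨x0, hx0⟩ : ∃ x, b x y0 ≠ 0 := by
          by_contra h
          push_neg at h
          exact hy0 (hnd.2 y0 h)
        have h1 : α₀ (b y0 x0) = b x0 y0 * c := hcb' x0 y0
        have h2 : α₀ (b x0 y0) = b y0 x0 * c := hcb' y0 x0
        have hbyx : b y0 x0 ≠ 0 := by
          intro h
          rw [h, map_zero] at h1
          rcases mul_eq_zero.mp h1.symm with h' | h'
          · exact hx0 h'
          · exact hc h'
        have hkey : c * α₀ c = 1 := by
          have h3 : b y0 x0 = α₀ (b x0 y0) * α₀ c := by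
            rw [← map_mul, ← h1, hα₀]
          rw [h2] at h3
          have h4 : b y0 x0 * 1 = b y0 x0 * (c * α₀ c) := by
            conv_lhs => rw [mul_one, h3]
            rw [mul_assoc]
          exact (mul_left_cancel₀ hbyx h4).symm
        refine ⟨c⁻¹, ?_, fun x y => ?_⟩
        · rw [map_inv₀, ← mul_inv, hkey, inv_one]
        · rw [hcb' x y, mul_comm (b x y) c, ← mul_assoc, inv_mul_cancel₀ hc, one_mul]
    · rintro ⟨lam, hlam, hherm⟩ w
      ext y
      refine Stmt0Aux.cancel_right α₀ hb hnd fun x => ?_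
      calc b x (α (α w) y) = b (α w x) y := (hadj (α w) x y).symm
        _ = lam * α₀ (b y (α w x)) := hherm _ _
        _ = lam * α₀ (b (w y) x) := by rw [← hadj w y x]
        _ = lam * α₀ (lam * α₀ (b x (w y))) := by rw [hherm (w y) x]
        _ = (lam * α₀ lam) * b x (w y) := by rw [map_mul, hα₀]; ring
        _ = b x (w y) := by rw [hlam, one_mul]
end

section
/- Let R be a ring, M a right R-module, K a double R-module, b : M × M → K a general bilinear form, and θ an anti-automorphism of K. Then: (1) if b is right regular, then b admits a right θ-asymmetry; (2) if b is right injective, then b admits at most one right θ-asymmetry; (3) if θ is an involution of K and b is θ-symmetric, then b is right regular if and only if it is left regular, and b is right injective if and only if it is left injective. -/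
open MulOpposite TensorProduct Function

universe u v w v'

section Core

/-- An inner automorphism of a ring: conjugation by a unit. -/
def IsInnerAut {W : Type*} [Ring W] (φ : W → W) : Prop :=
  ∃ u : Wˣ, ∀ w : W, φ w = ↑u * w * ↑u⁻¹

variable (R : Type u) [Ring R]

/-- A double `R`-module structure on the additive group `K`: two commuting
right `R`-module structures `m0` and `m1`. -/
structure DoubleModule (K : Type v) [AddCommGroup K] where
  m0 : K → R → K
  m1 : K → R → K
  m0_add_left : ∀ (k k' : K) (r : R), m0 (k + k') r = m0 k r + m0 k' r
  m0_add_right : ∀ (k : K) (r r' : R), m0 k (r + r') = m0 k r + m0 k r'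
  m0_mul : ∀ (k : K) (r r' : R), m0 k (r * r') = m0 (m0 k r) r'
  m0_one : ∀ k : K, m0 k 1 = k
  m1_add_left : ∀ (k k' : K) (r : R), m1 (k + k') r = m1 k r + m1 k' r
  m1_add_right : ∀ (k : K) (r r' : R), m1 k (r + r') = m1 k r + m1 k r'
  m1_mul : ∀ (k : K) (r r' : R), m1 k (r * r') = m1 (m1 k r) r'
  m1_one : ∀ k : K, m1 k 1 = k
  comm : ∀ (k : K) (a b : R), m1 (m0 k a) b = m0 (m1 k b) a

variable {R}

/-- A homomorphism of double `R`-modules. -/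
def IsDoubleHom {K : Type v} {K' : Type w} [AddCommGroup K] [AddCommGroup K']
    (DK : DoubleModule R K) (DK' : DoubleModule R K') (f : K → K') : Prop :=
  (∀ k k' : K, f (k + k') = f k + f k') ∧
  (∀ (k : K) (r : R), f (DK.m0 k r) = DK'.m0 (f k) r) ∧
  (∀ (k : K) (r : R), f (DK.m1 k r) = DK'.m1 (f k) r)

/-- An isomorphism of double `R`-modules. -/
def IsDoubleIso {K : Type v} {K' : Type w} [AddCommGroup K] [AddCommGroup K']
    (DK : DoubleModule R K) (DK' : DoubleModule R K') (f : K → K') : Prop :=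
  IsDoubleHom DK DK' f ∧ Function.Bijective f

/-- An anti-automorphism of a double `R`-module: an additive bijection exchanging
the two module structures. -/
def IsDoubleAntiAuto {K : Type v} [AddCommGroup K] (DK : DoubleModule R K) (θ : K → K) : Prop :=
  Function.Bijective θ ∧ (∀ k k' : K, θ (k + k') = θ k + θ k') ∧
  (∀ (k : K) (r : R), θ (DK.m0 k r) = DK.m1 (θ k) r) ∧
  (∀ (k : K) (r : R), θ (DK.m1 k r) = DK.m0 (θ k) r)

variable (R)

/-- A general bilinear form on a right `R`-module `M` (encoded as a module over `Rᵐᵒᵖ`)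
with values in a double `R`-module `(K, DK)`. -/
structure GBF (M : Type v) [AddCommGroup M] [Module Rᵐᵒᵖ M]
    (K : Type w) [AddCommGroup K] (DK : DoubleModule R K) where
  b : M → M → K
  add_left : ∀ x x' y : M, b (x + x') y = b x y + b x' y
  add_right : ∀ x y y' : M, b x (y + y') = b x y + b x y'
  smul_left : ∀ (x y : M) (r : R), b (op r • x) y = DK.m0 (b x y) r
  smul_right : ∀ (x y : M) (r : R), b x (op r • y) = DK.m1 (b x y) r

variable {R}

namespace GBF

variable {M : Type v} [AddCommGroup M] [Module Rᵐᵒᵖ M]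
  {K : Type w} [AddCommGroup K] {DK : DoubleModule R K}

/-- The right adjoint of `β` is injective. -/
def RightInjective (β : GBF R M K DK) : Prop :=
  ∀ x x' : M, (∀ y : M, β.b y x = β.b y x') → x = x'

/-- The right adjoint of `β` is bijective onto `Hom_R(M, K₀)`. -/
def RightRegular (β : GBF R M K DK) : Prop :=
  β.RightInjective ∧
  ∀ f : M → K, (∀ y y' : M, f (y + y') = f y + f y') →
    (∀ (y : M) (r : R), f (op r • y) = DK.m0 (f y) r) →
    ∃ x : M, ∀ y : M, f y = β.b y x

/-- The left adjoint of `β` is injective. -/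
def LeftInjective (β : GBF R M K DK) : Prop :=
  ∀ x x' : M, (∀ y : M, β.b x y = β.b x' y) → x = x'

/-- The left adjoint of `β` is bijective onto `Hom_R(M, K₁)`. -/
def LeftRegular (β : GBF R M K DK) : Prop :=
  β.LeftInjective ∧
  ∀ f : M → K, (∀ y y' : M, f (y + y') = f y + f y') →
    (∀ (y : M) (r : R), f (op r • y) = DK.m1 (f y) r) →
    ∃ x : M, ∀ y : M, f y = β.b x y

/-- `α` is an adjoint anti-endomorphism for `β`: `β(w x, y) = β(x, α(w) y)`. -/
def IsAdjoint (β : GBF R M K DK) (α : Module.End Rᵐᵒᵖ M → Module.End Rᵐᵒᵖ M) : Prop :=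
  ∀ (w : Module.End Rᵐᵒᵖ M) (x y : M), β.b (w x) y = β.b x (α w y)

/-- Similarity of general bilinear forms on the same module. -/
def Similar {K' : Type v'} [AddCommGroup K'] {DK' : DoubleModule R K'}
    (β : GBF R M K DK) (β' : GBF R M K' DK') : Prop :=
  ∃ f : K → K', IsDoubleIso DK DK' f ∧ ∀ x y : M, β'.b x y = f (β.b x y)

end GBF

section Kalpha

variable {M : Type v} [AddCommGroup M] [Module Rᵐᵒᵖ M]

/-- The subgroup of `M ⊗_ℤ M` generated by the elements `(w x) ⊗ y - x ⊗ (α w y)`. -/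
def kalphaRel (α : Module.End Rᵐᵒᵖ M → Module.End Rᵐᵒᵖ M) : Submodule ℤ (M ⊗[ℤ] M) :=
  Submodule.span ℤ
    {z | ∃ (w : Module.End Rᵐᵒᵖ M) (x y : M), z = (w x) ⊗ₜ[ℤ] y - x ⊗ₜ[ℤ] (α w y)}

/-- `K_α`, the quotient of `M ⊗_ℤ M` by the relations `(w x) ⊗ y = x ⊗ (α w y)`. -/
abbrev Kalpha (α : Module.End Rᵐᵒᵖ M → Module.End Rᵐᵒᵖ M) : Type _ :=
  (M ⊗[ℤ] M) ⧸ kalphaRel α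

/-- The map `x ⊗ y ↦ (x·r) ⊗ y` on `M ⊗_ℤ M`. -/
noncomputable def smulLeftMap (r : R) : (M ⊗[ℤ] M) →ₗ[ℤ] (M ⊗[ℤ] M) :=
  TensorProduct.map ((DistribMulAction.toAddMonoidHom M (op r : Rᵐᵒᵖ)).toIntLinearMap)
    LinearMap.id

/-- The map `x ⊗ y ↦ x ⊗ (y·r)` on `M ⊗_ℤ M`. -/
noncomputable def smulRightMap (r : R) : (M ⊗[ℤ] M) →ₗ[ℤ] (M ⊗[ℤ] M) :=
  TensorProduct.map LinearMap.id
    ((DistribMulAction.toAddMonoidHom M (op r : Rᵐᵒᵖ)).toIntLinearMap)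

theorem kalphaRel_le_left (α : Module.End Rᵐᵒᵖ M → Module.End Rᵐᵒᵖ M) (r : R) :
    kalphaRel α ≤ (kalphaRel α).comap (smulLeftMap (M := M) r) := by
  rw [kalphaRel, Submodule.span_le]
  rintro _ ⟨w, x, y, rfl⟩
  rw [SetLike.mem_coe, Submodule.mem_comap, map_sub]
  have h1 : smulLeftMap (M := M) r ((w x) ⊗ₜ[ℤ] y) = (w (op r • x)) ⊗ₜ[ℤ] y := by
    simp [smulLeftMap, map_smul]; rfl
  have h2 : smulLeftMap (M := M) r (x ⊗ₜ[ℤ] (α w y)) = (op r • x) ⊗ₜ[ℤ] (α w y) := by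
    simp [smulLeftMap]; rfl
  rw [h1, h2]
  exact Submodule.subset_span ⟨w, op r • x, y, rfl⟩

theorem kalphaRel_le_right (α : Module.End Rᵐᵒᵖ M → Module.End Rᵐᵒᵖ M) (r : R) :
    kalphaRel α ≤ (kalphaRel α).comap (smulRightMap (M := M) r) := by
  rw [kalphaRel, Submodule.span_le]
  rintro _ ⟨w, x, y, rfl⟩
  rw [SetLike.mem_coe, Submodule.mem_comap, map_sub]
  have h1 : smulRightMap (M := M) r ((w x) ⊗ₜ[ℤ] y) = (w x) ⊗ₜ[ℤ] (op r • y) := by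
    simp [smulRightMap]; rfl
  have h2 : smulRightMap (M := M) r (x ⊗ₜ[ℤ] (α w y)) = x ⊗ₜ[ℤ] (α w (op r • y)) := by
    simp [smulRightMap, map_smul]; rfl
  rw [h1, h2]
  exact Submodule.subset_span ⟨w, x, op r • y, rfl⟩

/-- The `m0`-action on `K_α`. -/
noncomputable def kSmul0 (α : Module.End Rᵐᵒᵖ M → Module.End Rᵐᵒᵖ M) (r : R) :
    Kalpha α →ₗ[ℤ] Kalpha α :=
  Submodule.mapQ _ _ (smulLeftMap r) (kalphaRel_le_left α r)

/-- The `m1`-action on `K_α`. -/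
noncomputable def kSmul1 (α : Module.End Rᵐᵒᵖ M → Module.End Rᵐᵒᵖ M) (r : R) :
    Kalpha α →ₗ[ℤ] Kalpha α :=
  Submodule.mapQ _ _ (smulRightMap r) (kalphaRel_le_right α r)

theorem kSmul0_mk (α : Module.End Rᵐᵒᵖ M → Module.End Rᵐᵒᵖ M) (r : R) (t : M ⊗[ℤ] M) :
    kSmul0 α r (Submodule.Quotient.mk t) = Submodule.Quotient.mk (smulLeftMap r t) := rfl

theorem kSmul1_mk (α : Module.End Rᵐᵒᵖ M → Module.End Rᵐᵒᵖ M) (r : R) (t : M ⊗[ℤ] M) :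
    kSmul1 α r (Submodule.Quotient.mk t) = Submodule.Quotient.mk (smulRightMap r t) := rfl

/-- The double `R`-module structure on `K_α`. -/
noncomputable def KalphaDM (α : Module.End Rᵐᵒᵖ M → Module.End Rᵐᵒᵖ M) :
    DoubleModule R (Kalpha α) where
  m0 k r := kSmul0 α r k
  m1 k r := kSmul1 α r k
  m0_add_left k k' r := map_add _ k k'
  m0_add_right := by
    intro k r r'
    induction k using Submodule.Quotient.induction_on with
    | _ t =>
      rw [kSmul0_mk, kSmul0_mk, kSmul0_mk, ← Submodule.Quotient.mk_add]
      congr 1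
      induction t with
      | zero => simp
      | tmul x y => change (op (r + r') • x) ⊗ₜ[ℤ] y = (op r • x) ⊗ₜ[ℤ] y + (op r' • x) ⊗ₜ[ℤ] y; simp [smulLeftMap, op_add, add_smul, TensorProduct.add_tmul]
      | add a b ha hb => rw [map_add, map_add, map_add, ha, hb]; abel
  m0_mul := by
    intro k r r'
    induction k using Submodule.Quotient.induction_on with
    | _ t =>
      rw [kSmul0_mk, kSmul0_mk, kSmul0_mk]
      congr 1
      induction t with
      | zero => simp
      | tmul x y => change (op (r * r') • x) ⊗ₜ[ℤ] y = (op r' • op r • x) ⊗ₜ[ℤ] y; simp [smulLeftMap, op_mul, mul_smul]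
      | add a b ha hb => rw [map_add, map_add, map_add, ha, hb]
  m0_one := by
    intro k
    induction k using Submodule.Quotient.induction_on with
    | _ t =>
      rw [kSmul0_mk]
      congr 1
      induction t with
      | zero => simp
      | tmul x y => change (op (1 : R) • x) ⊗ₜ[ℤ] y = x ⊗ₜ[ℤ] y; simp [smulLeftMap]
      | add a b ha hb => rw [map_add, ha, hb]
  m1_add_left k k' r := map_add _ k k'
  m1_add_right := by
    intro k r r'
    induction k using Submodule.Quotient.induction_on with
    | _ t =>
      rw [kSmul1_mk, kSmul1_mk, kSmul1_mk, ← Submodule.Quotient.mk_add]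
      congr 1
      induction t with
      | zero => simp
      | tmul x y => change x ⊗ₜ[ℤ] (op (r + r') • y) = x ⊗ₜ[ℤ] (op r • y) + x ⊗ₜ[ℤ] (op r' • y); simp [smulRightMap, op_add, add_smul, TensorProduct.tmul_add]
      | add a b ha hb => rw [map_add, map_add, map_add, ha, hb]; abel
  m1_mul := by
    intro k r r'
    induction k using Submodule.Quotient.induction_on with
    | _ t =>
      rw [kSmul1_mk, kSmul1_mk, kSmul1_mk]
      congr 1
      induction t with
      | zero => simp
      | tmul x y => change x ⊗ₜ[ℤ] (op (r * r') • y) = x ⊗ₜ[ℤ] (op r' • op r • y); simp [smulRightMap, op_mul, mul_smul]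
      | add a b ha hb => rw [map_add, map_add, map_add, ha, hb]
  m1_one := by
    intro k
    induction k using Submodule.Quotient.induction_on with
    | _ t =>
      rw [kSmul1_mk]
      congr 1
      induction t with
      | zero => simp
      | tmul x y => change x ⊗ₜ[ℤ] (op (1 : R) • y) = x ⊗ₜ[ℤ] y; simp [smulRightMap]
      | add a b ha hb => rw [map_add, ha, hb]
  comm := by
    intro k a c
    induction k using Submodule.Quotient.induction_on with
    | _ t =>
      rw [kSmul0_mk, kSmul1_mk, kSmul1_mk, kSmul0_mk]
      congr 1
      induction t with
      | zero => simp
      | tmul x y => change (op a • x) ⊗ₜ[ℤ] (op c • y) = (op a • x) ⊗ₜ[ℤ] (op c • y); simp [smulLeftMap, smulRightMap]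
      | add p q hp hq => rw [map_add, map_add, map_add, map_add, hp, hq]

/-- The universal general bilinear form `b_α : M × M → K_α`. -/
noncomputable def balpha (α : Module.End Rᵐᵒᵖ M → Module.End Rᵐᵒᵖ M) :
    GBF R M (Kalpha α) (KalphaDM α) where
  b x y := Submodule.Quotient.mk (x ⊗ₜ[ℤ] y)
  add_left x x' y := by
    rw [TensorProduct.add_tmul, Submodule.Quotient.mk_add]
  add_right x y y' := by
    rw [TensorProduct.tmul_add, Submodule.Quotient.mk_add]
  smul_left x y r := by
    show _ = kSmul0 α r (Submodule.Quotient.mk (x ⊗ₜ[ℤ] y))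
    rw [kSmul0_mk]
    congr 1
  smul_right x y r := by
    show _ = kSmul1 α r (Submodule.Quotient.mk (x ⊗ₜ[ℤ] y))
    rw [kSmul1_mk]
    congr 1

end Kalpha

end Core

/-- `λ` is a right `θ`-asymmetry of the general bilinear form `β`:
`θ(b(x,y)) = b(y, λ x)` for all `x, y`. -/
def IsRightAsym {R : Type u} [Ring R] {M : Type v} [AddCommGroup M] [Module Rᵐᵒᵖ M]
    {K : Type w} [AddCommGroup K] {DK : DoubleModule R K}
    (β : GBF R M K DK) (θ : K → K) (lam : Module.End Rᵐᵒᵖ M) : Prop :=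
  ∀ x y : M, θ (β.b x y) = β.b y (lam x)

/-- (1) A right regular form admits a right `θ`-asymmetry; (2) a right
injective form admits at most one right `θ`-asymmetry; (3) if `θ` is an involution and `b`
is `θ`-symmetric, then right regularity (injectivity) is equivalent to left regularity
(injectivity). -/
theorem stmt_1 {R : Type u} [Ring R] {M : Type v} [AddCommGroup M] [Module Rᵐᵒᵖ M]
    {K : Type w} [AddCommGroup K] {DK : DoubleModule R K}
    (β : GBF R M K DK) (θ : K → K) (hθ : IsDoubleAntiAuto DK θ) :
    (β.RightRegular → ∃ lam : Module.End Rᵐᵒᵖ M, IsRightAsym β θ lam) ∧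
    (β.RightInjective → ∀ lam lam' : Module.End Rᵐᵒᵖ M,
      IsRightAsym β θ lam → IsRightAsym β θ lam' → lam = lam') ∧
    ((∀ k, θ (θ k) = k) → (∀ x y : M, β.b x y = θ (β.b y x)) →
      (β.RightRegular ↔ β.LeftRegular) ∧ (β.RightInjective ↔ β.LeftInjective)) := by
  obtain ⟨θinj, θadd, θm0, θm1⟩ := hθ
  refine ⟨?_, ?_, ?_⟩
  · rintro ⟨hinj, hsurj⟩
    have key : ∀ x : M, ∃ z : M, ∀ y, θ (β.b x y) = β.b y z := by
      intro x
      exact hsurj (fun y => θ (β.b x y))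
        (fun y y' => by rw [β.add_right, θadd])
        (fun y r => by rw [β.smul_right, θm1])
    choose g hg using key
    refine ⟨{ toFun := g, map_add' := ?_, map_smul' := ?_ }, fun x y => hg x y⟩
    · intro x x'
      apply hinj
      intro y
      rw [← hg (x + x') y, β.add_left, θadd, hg x y, hg x' y, β.add_right]
    · intro c x
      apply hinj
      intro y
      have hc : c = op c.unop := rfl
      rw [RingHom.id_apply, ← hg (c • x) y, hc, β.smul_left, θm0, hg x y,
        ← β.smul_right]
  · intro hinj lam lam' h h'
    apply LinearMap.ext
    intro x
    apply hinj
    intro y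
    rw [← h x y, ← h' x y]
  · intro hinv hsym
    have inj_iff : β.RightInjective ↔ β.LeftInjective := by
      constructor
      · intro hinj x x' h
        apply hinj
        intro y
        rw [hsym y x, hsym y x', h y]
      · intro hinj x x' h
        apply hinj
        intro y
        rw [hsym x y, hsym x' y, h y]
    refine ⟨?_, inj_iff⟩
    constructor
    · rintro ⟨hinj, hsurj⟩
      refine ⟨inj_iff.1 hinj, ?_⟩
      intro f fadd fsmul
      obtain ⟨x, hx⟩ := hsurj (fun y => θ (f y))
        (fun y y' => by rw [fadd, θadd])
        (fun y r => by rw [fsmul, θm1])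
      refine ⟨x, fun y => ?_⟩
      have := congrArg θ (hx y)
      rw [hinv, ← hsym x y] at this
      exact this
    · rintro ⟨hinj, hsurj⟩
      refine ⟨inj_iff.2 hinj, ?_⟩
      intro f fadd fsmul
      obtain ⟨x, hx⟩ := hsurj (fun y => θ (f y))
        (fun y y' => by rw [fadd, θadd])
        (fun y r => by rw [fsmul, θm0])
      refine ⟨x, fun y => ?_⟩
      have := congrArg θ (hx y)
      rw [hinv, hsym x y, hinv] at this
      exact this
end

section
/- Let W be a ring and e ∈ W an idempotent which is full, i.e., W e W = W. Then for every right W-module N and every left W-module M, the additive map φ : N e ⊗_{eWe} e M → N ⊗_W M determined by φ(x ⊗ y) = x ⊗ y (for x ∈ Ne, y ∈ eM) is a well-defined isomorphism of abelian groups. -/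
open MulOpposite TensorProduct Function

universe u v w v' w'

section BalTensor

/-- The subgroup of relations defining the balanced tensor product `A ⊗_S B` of a right
`S`-module `A` and a left `S`-module `B` over a (possibly noncommutative) ring `S`. -/
def balRel (S : Type u) [Ring S] (A : Type v) [AddCommGroup A] [Module Sᵐᵒᵖ A]
    (B : Type w) [AddCommGroup B] [Module S B] : Submodule ℤ (A ⊗[ℤ] B) :=
  Submodule.span ℤ
    {z | ∃ (s : S) (a : A) (b : B), z = (op s • a) ⊗ₜ[ℤ] b - a ⊗ₜ[ℤ] (s • b)}

/-- The balanced tensor product `A ⊗_S B` over a possibly noncommutative ring `S`. -/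
abbrev BalTensor (S : Type u) [Ring S] (A : Type v) [AddCommGroup A] [Module Sᵐᵒᵖ A]
    (B : Type w) [AddCommGroup B] [Module S B] : Type (max v w) :=
  (A ⊗[ℤ] B) ⧸ balRel S A B

/-- Functoriality of the balanced tensor product in both arguments. -/
noncomputable def balMap {S : Type u} [Ring S] {A : Type v} {A' : Type v'}
    {B : Type w} {B' : Type w'}
    [AddCommGroup A] [AddCommGroup A'] [AddCommGroup B] [AddCommGroup B']
    [Module Sᵐᵒᵖ A] [Module Sᵐᵒᵖ A'] [Module S B] [Module S B']
    (f : A →ₗ[Sᵐᵒᵖ] A') (g : B →ₗ[S] B') :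
    BalTensor S A B →ₗ[ℤ] BalTensor S A' B' :=
  Submodule.liftQ _ ((balRel S A' B').mkQ ∘ₗ
      TensorProduct.map (f.toAddMonoidHom.toIntLinearMap) (g.toAddMonoidHom.toIntLinearMap))
    (by
      rw [balRel, Submodule.span_le]
      rintro _ ⟨s, a, b, rfl⟩
      rw [SetLike.mem_coe, LinearMap.mem_ker]
      erw [LinearMap.comp_apply, map_sub,
        TensorProduct.map_tmul, TensorProduct.map_tmul]
      have h1 : f.toAddMonoidHom.toIntLinearMap (op s • a) = op s • f a := f.map_smul _ _
      have h2 : g.toAddMonoidHom.toIntLinearMap (s • b) = s • g b := g.map_smul _ _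
      rw [h1, h2, map_sub, sub_eq_zero]
      have hmem : (op s • f a) ⊗ₜ[ℤ] (g.toAddMonoidHom.toIntLinearMap b) -
          (f.toAddMonoidHom.toIntLinearMap a) ⊗ₜ[ℤ] (s • g b) ∈ balRel S A' B' :=
        Submodule.subset_span ⟨s, f a, g b, rfl⟩
      rw [← sub_eq_zero] at *
      rw [← map_sub]
      exact (Submodule.Quotient.mk_eq_zero _).mpr hmem)

theorem balMap_mk {S : Type u} [Ring S] {A : Type v} {A' : Type v'}
    {B : Type w} {B' : Type w'}
    [AddCommGroup A] [AddCommGroup A'] [AddCommGroup B] [AddCommGroup B']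
    [Module Sᵐᵒᵖ A] [Module Sᵐᵒᵖ A'] [Module S B] [Module S B']
    (f : A →ₗ[Sᵐᵒᵖ] A') (g : B →ₗ[S] B') (a : A) (b : B) :
    balMap f g (Submodule.Quotient.mk (a ⊗ₜ[ℤ] b)) =
      Submodule.Quotient.mk ((f a) ⊗ₜ[ℤ] (g b)) := rfl

/-- A left `S`-module `F` is flat if `— ⊗_S F` preserves injectivity of maps of right
`S`-modules. -/
def LeftFlat (S : Type u) [Ring S] (F : Type w) [AddCommGroup F] [Module S F] : Prop :=
  ∀ (A A' : Type u) (iA : AddCommGroup A) (iA' : AddCommGroup A')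
    (mA : Module Sᵐᵒᵖ A) (mA' : Module Sᵐᵒᵖ A') (f : A →ₗ[Sᵐᵒᵖ] A'),
    Function.Injective f → Function.Injective (balMap f (LinearMap.id : F →ₗ[S] F))

/-- A right `S`-module `F` is flat if `F ⊗_S —` preserves injectivity of maps of left
`S`-modules. -/
def RightFlat (S : Type u) [Ring S] (F : Type v) [AddCommGroup F] [Module Sᵐᵒᵖ F] : Prop :=
  ∀ (B B' : Type u) (iB : AddCommGroup B) (iB' : AddCommGroup B')
    (mB : Module S B) (mB' : Module S B') (g : B →ₗ[S] B'),
    Function.Injective g → Function.Injective (balMap (LinearMap.id : F →ₗ[Sᵐᵒᵖ] F) g)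

end BalTensor

section Corner

variable {W : Type u} [Ring W]

/-- The additive subgroup `eWe = {x : W | e x e = x}` of `W`. -/
def cornerAdd (e : W) : AddSubgroup W where
  carrier := {x | e * x * e = x}
  add_mem' := by
    intro a b ha hb
    simp only [Set.mem_setOf_eq] at *
    rw [mul_add, add_mul, ha, hb]
  zero_mem' := by simp
  neg_mem' := by
    intro a ha
    simp only [Set.mem_setOf_eq] at *
    rw [mul_neg, neg_mul, ha]

theorem corner_one_mul (e : W) (he : e * e = e) {x : W} (hx : e * x * e = x) :
    e * x = x := by
  conv_lhs => rw [← hx]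
  rw [← mul_assoc e (e * x) e, ← mul_assoc e e x, he]
  exact hx

theorem corner_mul_one (e : W) (he : e * e = e) {x : W} (hx : e * x * e = x) :
    x * e = x := by
  conv_lhs => rw [← hx]
  rw [mul_assoc (e * x) e e, he]
  exact hx

theorem corner_mul_mem (e : W) (he : e * e = e) {x y : W}
    (hx : e * x * e = x) (hy : e * y * e = y) : e * (x * y) * e = x * y := by
  rw [← mul_assoc e x y, corner_one_mul e he hx, mul_assoc x y e,
    corner_mul_one e he hy]

/-- The corner ring structure on `eWe`, with unit `e`. -/
def cornerRing (e : W) (he : e * e = e) : Ring (cornerAdd e) :=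
  { (inferInstance : AddCommGroup (cornerAdd e)) with
    mul := fun x y => ⟨x.1 * y.1, corner_mul_mem e he x.2 y.2⟩
    one := ⟨e, by show e * e * e = e; rw [he, he]⟩
    mul_assoc := fun x y z => Subtype.ext (mul_assoc x.1 y.1 z.1)
    one_mul := fun x => Subtype.ext (corner_one_mul e he x.2)
    mul_one := fun x => Subtype.ext (corner_mul_one e he x.2)
    left_distrib := fun x y z => Subtype.ext (mul_add x.1 y.1 z.1)
    right_distrib := fun x y z => Subtype.ext (add_mul x.1 y.1 z.1)
    zero_mul := fun x => Subtype.ext (zero_mul x.1)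
    mul_zero := fun x => Subtype.ext (mul_zero x.1) }

variable (e : W)

/-- For a right `W`-module `N`, the additive subgroup `Ne = {x : N | x·e = x}`. -/
def rightCorner (N : Type v) [AddCommGroup N] [Module Wᵐᵒᵖ N] : AddSubgroup N where
  carrier := {x | op e • x = x}
  add_mem' := by
    intro a b ha hb
    simp only [Set.mem_setOf_eq] at *
    rw [smul_add, ha, hb]
  zero_mem' := by simp
  neg_mem' := by
    intro a ha
    simp only [Set.mem_setOf_eq] at *
    rw [smul_neg, ha]

/-- For a left `W`-module `M`, the additive subgroup `eM = {y : M | e·y = y}`. -/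
def leftCorner (M : Type w) [AddCommGroup M] [Module W M] : AddSubgroup M where
  carrier := {y | e • y = y}
  add_mem' := by
    intro a b ha hb
    simp only [Set.mem_setOf_eq] at *
    rw [smul_add, ha, hb]
  zero_mem' := by simp
  neg_mem' := by
    intro a ha
    simp only [Set.mem_setOf_eq] at *
    rw [smul_neg, ha]

variable (he : e * e = e) {N : Type v} [AddCommGroup N] [Module Wᵐᵒᵖ N]
  {M : Type w} [AddCommGroup M] [Module W M]

/-- The right action of the corner ring `eWe` on `Ne`. -/
def cornerRsmul (x : rightCorner e N) (s : cornerAdd e) : rightCorner e N :=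
  ⟨op s.1 • x.1, by
    show op e • (op s.1 • x.1) = op s.1 • x.1
    rw [← mul_smul, ← op_mul, corner_mul_one e he s.2]⟩

/-- The left action of the corner ring `eWe` on `eM`. -/
def cornerLsmul (s : cornerAdd e) (y : leftCorner e M) : leftCorner e M :=
  ⟨s.1 • y.1, by
    show e • (s.1 • y.1) = s.1 • y.1
    rw [← mul_smul, corner_one_mul e he s.2]⟩

/-- The relations defining the balanced tensor product `Ne ⊗_{eWe} eM`. -/
def cornerRel : Submodule ℤ ((rightCorner e N) ⊗[ℤ] (leftCorner e M)) :=
  Submodule.span ℤ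
    {z | ∃ (s : cornerAdd e) (x : rightCorner e N) (y : leftCorner e M),
      z = (cornerRsmul e he x s) ⊗ₜ[ℤ] y - x ⊗ₜ[ℤ] (cornerLsmul e he s y)}

/-- The canonical additive map `Ne ⊗_{eWe} eM → N ⊗_W M`, `x ⊗ y ↦ x ⊗ y`. -/
noncomputable def cornerToBal :
    ((rightCorner e N) ⊗[ℤ] (leftCorner e M) ⧸ cornerRel e he (N := N) (M := M))
      →ₗ[ℤ] BalTensor W N M :=
  Submodule.liftQ _ ((balRel W N M).mkQ ∘ₗ
      TensorProduct.map ((rightCorner e N).subtype.toIntLinearMap)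
        ((leftCorner e M).subtype.toIntLinearMap))
    (by
      rw [cornerRel, Submodule.span_le]
      rintro _ ⟨s, x, y, rfl⟩
      rw [SetLike.mem_coe, LinearMap.mem_ker, map_sub]
      erw [LinearMap.comp_apply,
        LinearMap.comp_apply, TensorProduct.map_tmul, TensorProduct.map_tmul]
      show Submodule.Quotient.mk ((op s.1 • x.1) ⊗ₜ[ℤ] y.1) -
          Submodule.Quotient.mk (x.1 ⊗ₜ[ℤ] (s.1 • y.1)) = 0
      rw [← Submodule.Quotient.mk_sub, Submodule.Quotient.mk_eq_zero]
      exact Submodule.subset_span ⟨s.1, x.1, y.1, rfl⟩)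


/-! ### Auxiliary machinery for the inverse map -/

include he in
theorem corner_eXe {X : W} : e * (e * X * e) * e = e * X * e := by
  rw [show e * (e * X * e) = e * X * e by rw [← mul_assoc, ← mul_assoc, he],
    mul_assoc, he]

include he in
theorem heX (X : W) : e * (e * X) = e * X := by rw [← mul_assoc, he]

def cw (X : W) : cornerAdd e := ⟨e * X * e, corner_eXe e he⟩

def rX (w : W) (x : N) : rightCorner e N :=
  ⟨op (w * e) • x, by
    show op e • (op (w * e) • x) = op (w * e) • x
    rw [← mul_smul, ← op_mul, mul_assoc, he]⟩

def lY (w : W) (y : M) : leftCorner e M :=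
  ⟨(e * w) • y, by
    show e • ((e * w) • y) = (e * w) • y
    rw [← mul_smul, ← mul_assoc, he]⟩

theorem mk_rel (s : cornerAdd e) (x : rightCorner e N) (y : leftCorner e M) :
    (Submodule.Quotient.mk ((cornerRsmul e he x s) ⊗ₜ[ℤ] y) :
        (rightCorner e N) ⊗[ℤ] (leftCorner e M) ⧸ cornerRel e he (N := N) (M := M))
      = Submodule.Quotient.mk (x ⊗ₜ[ℤ] (cornerLsmul e he s y)) := by
  rw [← sub_eq_zero, ← Submodule.Quotient.mk_sub, Submodule.Quotient.mk_eq_zero]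
  exact Submodule.subset_span ⟨s, x, y, rfl⟩

theorem mk_fsum {T : Type*} [AddCommGroup T] {p : Submodule ℤ T} {κ : Type*}
    (f : κ → T) (u : Finset κ) :
    (Submodule.Quotient.mk (∑ i ∈ u, f i) : T ⧸ p) = ∑ i ∈ u, Submodule.Quotient.mk (f i) :=
  map_sum p.mkQ f u

theorem mk_balrel (s : W) (x : N) (y : M) :
    (Submodule.Quotient.mk ((op s • x) ⊗ₜ[ℤ] y) : BalTensor W N M)
      = Submodule.Quotient.mk (x ⊗ₜ[ℤ] (s • y)) := by
  rw [← sub_eq_zero, ← Submodule.Quotient.mk_sub, Submodule.Quotient.mk_eq_zero]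
  exact Submodule.subset_span ⟨s, x, y, rfl⟩

variable {k : ℕ} (a b : Fin k → W)

noncomputable def psi0 (x : N) (y : M) :
    (rightCorner e N) ⊗[ℤ] (leftCorner e M) ⧸ cornerRel e he (N := N) (M := M) :=
  ∑ i, Submodule.Quotient.mk ((rX e he (a i) x) ⊗ₜ[ℤ] (lY e he (b i) y))

theorem psi0_add_left (x x' : N) (y : M) :
    psi0 e he a b (x + x') y = psi0 e he a b x y + psi0 e he a b x' y := by
  rw [psi0, psi0, psi0, ← Finset.sum_add_distrib]
  refine Finset.sum_congr rfl fun i _ => ?_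
  have : rX e he (a i) (x + x') = rX e he (a i) x + rX e he (a i) x' :=
    Subtype.ext (smul_add _ _ _)
  rw [this, TensorProduct.add_tmul, Submodule.Quotient.mk_add]

theorem psi0_add_right (x : N) (y y' : M) :
    psi0 e he a b x (y + y') = psi0 e he a b x y + psi0 e he a b x y' := by
  rw [psi0, psi0, psi0, ← Finset.sum_add_distrib]
  refine Finset.sum_congr rfl fun i _ => ?_
  have : lY e he (b i) (y + y') = lY e he (b i) y + lY e he (b i) y' :=
    Subtype.ext (smul_add _ _ _)
  rw [this, TensorProduct.tmul_add, Submodule.Quotient.mk_add]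

noncomputable def liftAdd {A : Type v} {B : Type w} {C : Type (max v w)}
    [AddCommGroup A] [AddCommGroup B] [AddCommGroup C]
    (f : A → B → C) (hl : ∀ x x' y, f (x + x') y = f x y + f x' y)
    (hr : ∀ x y y', f x (y + y') = f x y + f x y') : A ⊗[ℤ] B →ₗ[ℤ] C :=
  TensorProduct.lift
    ((AddMonoidHom.mk' (fun x => (AddMonoidHom.mk' (f x) (hr x)).toIntLinearMap)
        (fun x x' => LinearMap.ext fun y => hl x x' y)).toIntLinearMap)

theorem liftAdd_tmul {A : Type v} {B : Type w} {C : Type (max v w)}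
    [AddCommGroup A] [AddCommGroup B] [AddCommGroup C]
    (f : A → B → C) (hl : ∀ x x' y, f (x + x') y = f x y + f x' y)
    (hr : ∀ x y y', f x (y + y') = f x y + f x y') (x : A) (y : B) :
    liftAdd f hl hr (x ⊗ₜ[ℤ] y) = f x y := rfl

noncomputable def psiHom :
    N ⊗[ℤ] M →ₗ[ℤ]
      ((rightCorner e N) ⊗[ℤ] (leftCorner e M) ⧸ cornerRel e he (N := N) (M := M)) :=
  liftAdd (psi0 e he a b) (psi0_add_left e he a b) (psi0_add_right e he a b)

theorem psiHom_tmul (x : N) (y : M) :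
    psiHom e he a b (x ⊗ₜ[ℤ] y) = psi0 e he a b x y :=
  liftAdd_tmul _ _ _ x y

include he in
theorem psi0_balance (hsum : ∑ i, a i * e * b i = 1) (s : W) (x : N) (y : M) :
    psi0 e he a b (op s • x) y = psi0 e he a b x (s • y) := by
  have step1 : ∀ i, rX e he (a i) (op s • x)
      = ∑ j, cornerRsmul e he (rX e he (a j) x) (cw e he (b j * s * a i)) := by
    intro i
    apply Subtype.ext
    rw [AddSubmonoidClass.coe_finset_sum]
    show op (a i * e) • (op s • x)
        = ∑ j, op (e * (b j * s * a i) * e) • (op (a j * e) • x)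
    have hterm : ∀ j : Fin k,
        op (e * (b j * s * a i) * e) • (op (a j * e) • x)
          = op ((a j * e * b j) * (s * (a i * e))) • x := by
      intro j
      rw [← mul_smul, ← op_mul]
      congr 1
      simp only [mul_assoc, heX e he]
    simp only [hterm]
    rw [← Finset.sum_smul, ← mul_smul, ← op_mul]
    congr 1
    show op (s * (a i * e)) = ∑ j, op (a j * e * b j * (s * (a i * e)))
    calc op (s * (a i * e)) = op (∑ j, a j * e * b j * (s * (a i * e))) := by
          rw [← Finset.sum_mul, hsum, one_mul]
      _ = _ := Finset.op_sum _ _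
  have step2 : ∀ j, (∑ i, cornerLsmul e he (cw e he (b j * s * a i)) (lY e he (b i) y))
      = lY e he (b j * s) y := by
    intro j
    apply Subtype.ext
    rw [AddSubmonoidClass.coe_finset_sum]
    show (∑ i, (e * (b j * s * a i) * e) • ((e * b i) • y)) = (e * (b j * s)) • y
    have hterm : ∀ i : Fin k,
        (e * (b j * s * a i) * e) • ((e * b i) • y)
          = ((e * (b j * s)) * (a i * e * b i)) • y := by
      intro i
      rw [← mul_smul]
      congr 1
      simp only [mul_assoc, heX e he]
    simp only [hterm]
    rw [← Finset.sum_smul, ← Finset.mul_sum, hsum, mul_one]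
  calc psi0 e he a b (op s • x) y
      = ∑ i, ∑ j, Submodule.Quotient.mk
          ((cornerRsmul e he (rX e he (a j) x) (cw e he (b j * s * a i)))
            ⊗ₜ[ℤ] lY e he (b i) y) := by
        rw [psi0]
        refine Finset.sum_congr rfl fun i _ => ?_
        rw [step1 i, TensorProduct.sum_tmul, mk_fsum]
    _ = ∑ j, ∑ i, Submodule.Quotient.mk
          ((rX e he (a j) x) ⊗ₜ[ℤ]
            cornerLsmul e he (cw e he (b j * s * a i)) (lY e he (b i) y)) := by
        rw [Finset.sum_comm]
        exact Finset.sum_congr rfl fun i _ => Finset.sum_congr rfl fun j _ =>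
          mk_rel e he _ _ _
    _ = ∑ j, Submodule.Quotient.mk ((rX e he (a j) x) ⊗ₜ[ℤ] lY e he (b j * s) y) := by
        refine Finset.sum_congr rfl fun j _ => ?_
        rw [← step2 j, TensorProduct.tmul_sum, mk_fsum]
    _ = psi0 e he a b x (s • y) := by
        rw [psi0]
        refine Finset.sum_congr rfl fun j _ => ?_
        congr 1
        apply congrArg
        apply Subtype.ext
        show (e * (b j * s)) • y = (e * b j) • (s • y)
        rw [← mul_smul, mul_assoc]

theorem psiHom_ker (hsum : ∑ i, a i * e * b i = 1) :
    balRel W N M ≤ LinearMap.ker (psiHom e he a b) := by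
  rw [balRel, Submodule.span_le]
  rintro _ ⟨s, x, y, rfl⟩
  rw [SetLike.mem_coe, LinearMap.mem_ker, map_sub, psiHom_tmul, psiHom_tmul,
    sub_eq_zero]
  exact psi0_balance e he a b hsum s x y

/-- The inverse map `N ⊗_W M → Ne ⊗_{eWe} eM`. -/
noncomputable def Psi (hsum : ∑ i, a i * e * b i = 1) :
    BalTensor W N M →ₗ[ℤ]
      ((rightCorner e N) ⊗[ℤ] (leftCorner e M) ⧸ cornerRel e he (N := N) (M := M)) :=
  Submodule.liftQ _ (psiHom e he a b) (psiHom_ker e he a b hsum)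

theorem Psi_mk (hsum : ∑ i, a i * e * b i = 1) (n : N) (m : M) :
    Psi e he a b hsum (Submodule.Quotient.mk (n ⊗ₜ[ℤ] m)) = psi0 e he a b n m := by
  rw [Psi, Submodule.liftQ_apply, psiHom_tmul]

theorem comp1 (hsum : ∑ i, a i * e * b i = 1)
    (x : rightCorner e N) (y : leftCorner e M) :
    psi0 e he a b x.1 y.1
      = (Submodule.Quotient.mk (x ⊗ₜ[ℤ] y) :
          (rightCorner e N) ⊗[ℤ] (leftCorner e M) ⧸ cornerRel e he (N := N) (M := M)) := by
  have hx : ∀ i, rX e he (a i) x.1 = cornerRsmul e he x (cw e he (a i)) := by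
    intro i
    apply Subtype.ext
    show op (a i * e) • x.1 = op (e * a i * e) • x.1
    conv_lhs => rw [← x.2]
    show op (a i * e) • (op e • x.1) = _
    rw [← mul_smul, ← op_mul, ← mul_assoc]
  have hy : (∑ i, cornerLsmul e he (cw e he (a i)) (lY e he (b i) y.1)) = y := by
    apply Subtype.ext
    rw [AddSubmonoidClass.coe_finset_sum]
    show (∑ i, (e * a i * e) • ((e * b i) • y.1)) = y.1
    have hterm : ∀ i : Fin k,
        (e * a i * e) • ((e * b i) • y.1) = (e * (a i * e * b i)) • y.1 := by
      intro i
      rw [← mul_smul]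
      congr 1
      simp only [mul_assoc, heX e he]
    simp only [hterm]
    rw [← Finset.sum_smul, ← Finset.mul_sum, hsum, mul_one, y.2]
  calc psi0 e he a b x.1 y.1
      = ∑ i, Submodule.Quotient.mk
            (x ⊗ₜ[ℤ] cornerLsmul e he (cw e he (a i)) (lY e he (b i) y.1)) := by
        rw [psi0]
        exact Finset.sum_congr rfl fun i _ => by rw [hx i]; exact mk_rel e he _ _ _
    _ = Submodule.Quotient.mk (x ⊗ₜ[ℤ] y) := by
        rw [← mk_fsum, ← TensorProduct.tmul_sum, hy]

theorem comp2 (hsum : ∑ i, a i * e * b i = 1) (n : N) (m : M) :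
    cornerToBal e he (psi0 e he a b n m)
      = (Submodule.Quotient.mk (n ⊗ₜ[ℤ] m) : BalTensor W N M) := by
  rw [psi0, map_sum]
  have hterm : ∀ i : Fin k,
      cornerToBal e he (Submodule.Quotient.mk
        ((rX e he (a i) n) ⊗ₜ[ℤ] (lY e he (b i) m)))
        = Submodule.Quotient.mk (n ⊗ₜ[ℤ] ((a i * e * b i) • m)) := by
    intro i
    have h0 : cornerToBal e he (Submodule.Quotient.mk
        ((rX e he (a i) n) ⊗ₜ[ℤ] (lY e he (b i) m)))
        = Submodule.Quotient.mk ((op (a i * e) • n) ⊗ₜ[ℤ] ((e * b i) • m)) := rfl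
    rw [h0, mk_balrel]
    congr 2
    rw [← mul_smul]
    congr 1
    simp only [mul_assoc, heX e he]
  simp only [hterm]
  rw [← mk_fsum, ← TensorProduct.tmul_sum, ← Finset.sum_smul, hsum, one_smul]
/-- If `e` is a full idempotent of `W` (`W e W = W`), then for every
right `W`-module `N` and left `W`-module `M`, the canonical map
`φ : Ne ⊗_{eWe} eM → N ⊗_W M`, `x ⊗ y ↦ x ⊗ y`, is an isomorphism of abelian groups. -/
theorem stmt_13 {W : Type u} [Ring W] (e : W) (he : e * e = e)
    (hfull : ∃ (n : ℕ) (a b : Fin n → W), ∑ i, a i * e * b i = 1)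
    (N : Type v) [AddCommGroup N] [Module Wᵐᵒᵖ N]
    (M : Type w) [AddCommGroup M] [Module W M] :
    Function.Bijective (cornerToBal e he (N := N) (M := M)) ∧
    ∀ (x : rightCorner e N) (y : leftCorner e M),
      cornerToBal e he (Submodule.Quotient.mk (x ⊗ₜ[ℤ] y)) =
        Submodule.Quotient.mk (x.1 ⊗ₜ[ℤ] y.1) := by
  obtain ⟨k, a, b, hsum⟩ := hfull
  have h1 : ∀ p, Psi e he a b hsum (cornerToBal e he (N := N) (M := M) p) = p := by
    have heq : (Psi e he a b hsum) ∘ₗ (cornerToBal e he (N := N) (M := M))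
        = LinearMap.id := by
      apply Submodule.linearMap_qext
      apply TensorProduct.ext'
      intro x y
      show Psi e he a b hsum (cornerToBal e he (Submodule.Quotient.mk (x ⊗ₜ[ℤ] y)))
        = Submodule.Quotient.mk (x ⊗ₜ[ℤ] y)
      have h0 : cornerToBal e he (Submodule.Quotient.mk (x ⊗ₜ[ℤ] y))
          = (Submodule.Quotient.mk (x.1 ⊗ₜ[ℤ] y.1) : BalTensor W N M) := rfl
      rw [h0, Psi_mk, comp1 e he a b hsum]
    intro p
    exact DFunLike.congr_fun heq p
  have h2 : ∀ q, cornerToBal e he (N := N) (M := M) (Psi e he a b hsum q) = q := by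
    have heq : (cornerToBal e he (N := N) (M := M)) ∘ₗ (Psi e he a b hsum)
        = LinearMap.id := by
      apply Submodule.linearMap_qext
      apply TensorProduct.ext'
      intro n m
      show cornerToBal e he (Psi e he a b hsum (Submodule.Quotient.mk (n ⊗ₜ[ℤ] m)))
        = Submodule.Quotient.mk (n ⊗ₜ[ℤ] m)
      rw [Psi_mk, comp2 e he a b hsum]
    intro q
    exact DFunLike.congr_fun heq q
  refine ⟨⟨fun p q hpq => by rw [← h1 p, hpq, h1 q], fun q => ⟨Psi e he a b hsum q, h2 q⟩⟩,
    fun x y => rfl⟩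

end Corner
end
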